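/- For every γ ≥ 2, there exists a bipartite graph G on n = 3γ vertices without isolated vertices, with domination number γ, a unique minimum dominating set, and exactly 2γ + 2⌈γ/2⌉⌊γ/2⌋ edges. -/

import Mathlib

def IsDomSet {V : Type*} (G : SimpleGraph V) (D : Finset V) : Prop :=
  ∀ v, v ∉ D → ∃ u ∈ D, G.Adj u v

def IsUMDS {V : Type*} (G : SimpleGraph V) (D : Finset V) : Prop :=
  IsDomSet G D ∧ (∀ D', IsDomSet G D' → D.card ≤ D'.card) ∧
    (∀ D', IsDomSet G D' → D'.card = D.card → D' = D)
open Finset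
namespace Stmt13Aux

def rel (γ : ℕ) (u v : Fin γ × Fin 3) : Prop :=
  (u.1 = v.1 ∧ ((u.2 : ℕ) = 0 ∧ (v.2 : ℕ) ≠ 0 ∨ (v.2 : ℕ) = 0 ∧ (u.2 : ℕ) ≠ 0))
  ∨ ((u.1 : ℕ) < γ/2 ∧ (u.2 : ℕ) = 1 ∧ γ/2 ≤ (v.1 : ℕ) ∧ (v.2 : ℕ) ≠ 0)
  ∨ ((v.1 : ℕ) < γ/2 ∧ (v.2 : ℕ) = 1 ∧ γ/2 ≤ (u.1 : ℕ) ∧ (u.2 : ℕ) ≠ 0)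

instance (γ) : DecidableRel (rel γ) := fun u v => by unfold rel; infer_instance

def pg (γ : ℕ) : SimpleGraph (Fin γ × Fin 3) where
  Adj := rel γ
  symm := by
    constructor
    intro u v h
    rcases h with ⟨h1, h2⟩ | h | h
    · exact Or.inl ⟨h1.symm, h2.symm⟩
    · exact Or.inr (Or.inr h)
    · exact Or.inr (Or.inl h)
  loopless := by
    constructor
    intro u h
    rcases h with ⟨h1, h2⟩ | h | h <;> omega

instance (γ) : DecidableRel (pg γ).Adj := fun u v => inferInstanceAs (Decidable (rel γ u v))

lemma pg_adj (γ : ℕ) (u v : Fin γ × Fin 3) : (pg γ).Adj u v ↔ rel γ u v := Iff.rfl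

lemma card_filter_lt (γ k : ℕ) (hk : k ≤ γ) :
    (univ.filter fun i : Fin γ => (i : ℕ) < k).card = k := by
  have h : (univ.filter fun i : Fin γ => (i : ℕ) < k) =
      (Finset.range k).attachFin (fun m hm => lt_of_lt_of_le (Finset.mem_range.mp hm) hk) := by
    ext i
    simp [Finset.mem_attachFin]
  rw [h, Finset.card_attachFin, Finset.card_range]

lemma card_filter_ge (γ k : ℕ) (hk : k ≤ γ) :
    (univ.filter fun i : Fin γ => k ≤ (i : ℕ)).card = γ - k := by
  have := Finset.card_filter_add_card_filter_not
    (s := (univ : Finset (Fin γ))) (p := fun i : Fin γ => (i : ℕ) < k)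
  simp only [not_lt] at this
  have h1 := card_filter_lt γ k hk
  have h2 : (univ : Finset (Fin γ)).card = γ := by simp
  omega

lemma deg0 (γ : ℕ) (i : Fin γ) : (pg γ).degree (i, 0) = 2 := by
  have h : (pg γ).neighborFinset (i, 0) = {(i, (1 : Fin 3)), (i, 2)} := by
    ext ⟨j, s⟩
    have hs := s.isLt
    simp only [SimpleGraph.mem_neighborFinset, pg_adj, rel, mem_insert, mem_singleton,
      Prod.mk.injEq, Fin.ext_iff]
    simp
    omega
  rw [SimpleGraph.degree, h]
  rw [Finset.card_insert_of_notMem (by simp), Finset.card_singleton]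

lemma deg2L (γ : ℕ) (i : Fin γ) (hi : (i : ℕ) < γ/2) : (pg γ).degree (i, 2) = 1 := by
  have h : (pg γ).neighborFinset (i, 2) = {(i, (0 : Fin 3))} := by
    ext ⟨j, s⟩
    have hs := s.isLt
    simp only [SimpleGraph.mem_neighborFinset, pg_adj, rel, mem_singleton,
      Prod.mk.injEq, Fin.ext_iff]
    simp
    omega
  rw [SimpleGraph.degree, h, Finset.card_singleton]

lemma deg1L (γ : ℕ) (i : Fin γ) (hi : (i : ℕ) < γ/2) :
    (pg γ).degree (i, 1) = 1 + (γ - γ/2) * 2 := by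
  have h : (pg γ).neighborFinset (i, 1) =
      insert (i, (0 : Fin 3))
        ((univ.filter fun j : Fin γ => γ/2 ≤ (j : ℕ)) ×ˢ ({1, 2} : Finset (Fin 3))) := by
    ext ⟨j, s⟩
    have hs := s.isLt
    simp only [SimpleGraph.mem_neighborFinset, pg_adj, rel, mem_insert, Finset.mem_product,
      mem_filter, mem_univ, true_and, mem_singleton, Prod.mk.injEq, Fin.ext_iff]
    simp
    omega
  rw [SimpleGraph.degree, h, Finset.card_insert_of_notMem (by simp),
    Finset.card_product, card_filter_ge γ (γ/2) (by omega)]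
  have h2 : ({1, 2} : Finset (Fin 3)).card = 2 := by decide
  rw [h2]
  ring

lemma degR (γ : ℕ) (j : Fin γ) (s : Fin 3) (hj : γ/2 ≤ (j : ℕ)) (hs : (s : ℕ) ≠ 0) :
    (pg γ).degree (j, s) = 1 + γ/2 := by
  have h : (pg γ).neighborFinset (j, s) =
      insert (j, (0 : Fin 3))
        ((univ.filter fun i : Fin γ => (i : ℕ) < γ/2) ×ˢ ({1} : Finset (Fin 3))) := by
    ext ⟨u, t⟩
    have ht := t.isLt
    have hsv := s.isLt
    simp only [SimpleGraph.mem_neighborFinset, pg_adj, rel, mem_insert, Finset.mem_product,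
      mem_filter, mem_univ, true_and, mem_singleton, Prod.mk.injEq, Fin.ext_iff]
    simp
    omega
  rw [SimpleGraph.degree, h, Finset.card_insert_of_notMem (by simp),
    Finset.card_product, card_filter_lt γ (γ/2) (by omega), Finset.card_singleton, mul_one]
  omega

lemma edge_count (γ : ℕ) :
    (pg γ).edgeFinset.card = 2 * γ + 2 * (γ - γ/2) * (γ/2) := by
  have hsum := SimpleGraph.sum_degrees_eq_twice_card_edges (pg γ)
  rw [Fintype.sum_prod_type] at hsum
  have hrow : ∀ i : Fin γ, (∑ r : Fin 3, (pg γ).degree (i, r)) =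
      if (i : ℕ) < γ/2 then 4 + 2 * (γ - γ/2) else 4 + 2 * (γ/2) := by
    intro i
    rw [Fin.sum_univ_three]
    by_cases hi : (i : ℕ) < γ/2
    · rw [deg0, deg1L γ i hi, deg2L γ i hi, if_pos hi]; ring
    · rw [deg0, degR γ i 1 (by omega) (by simp), degR γ i 2 (by omega) (by simp), if_neg hi]
      ring
  rw [Finset.sum_congr rfl (fun i _ => hrow i), Finset.sum_ite, Finset.sum_const,
    Finset.sum_const] at hsum
  have hneg : (univ.filter fun i : Fin γ => ¬ ((i : ℕ) < γ/2)) =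
      univ.filter fun i : Fin γ => γ/2 ≤ (i : ℕ) := by
    simp [not_lt]
  rw [hneg, card_filter_lt γ (γ/2) (by omega), card_filter_ge γ (γ/2) (by omega),
    smul_eq_mul, smul_eq_mul] at hsum
  have key : 2 * (2 * γ + 2 * (γ - γ/2) * (γ/2)) = 2 * (pg γ).edgeFinset.card := by
    rw [← hsum]
    have hkm : γ/2 + (γ - γ/2) = γ := by omega
    nlinarith [hkm]
  omega


/-- the centers -/
def C (γ : ℕ) : Finset (Fin γ × Fin 3) := univ.filter (fun p => (p.2 : ℕ) = 0)

lemma mem_C (γ : ℕ) (p : Fin γ × Fin 3) : p ∈ C γ ↔ (p.2 : ℕ) = 0 := by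
  simp [C]

lemma card_C (γ : ℕ) : (C γ).card = γ := by
  have h : C γ = univ.image (fun i : Fin γ => (i, (0 : Fin 3))) := by
    ext ⟨i, r⟩
    simp only [mem_C, mem_image, mem_univ, true_and]
    constructor
    · intro hr
      exact ⟨i, by ext <;> simp <;> omega⟩
    · rintro ⟨j, hj⟩
      have : r = 0 := (Prod.ext_iff.mp hj).2.symm
      simp [this]
  rw [h, Finset.card_image_of_injective _ (fun a b hab => (Prod.ext_iff.mp hab).1), card_univ,
    Fintype.card_fin]

lemma C_domset (γ : ℕ) : ∀ v, v ∉ C γ → ∃ u ∈ C γ, (pg γ).Adj u v := by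
  rintro ⟨i, r⟩ hv
  rw [mem_C] at hv
  refine ⟨(i, 0), by simp [mem_C], ?_⟩
  rw [pg_adj]
  exact Or.inl ⟨rfl, Or.inl ⟨rfl, hv⟩⟩

/-- every dominating set has an element in each column -/
lemma column_witness {γ : ℕ} {D : Finset (Fin γ × Fin 3)}
    (hD : ∀ v, v ∉ D → ∃ u ∈ D, (pg γ).Adj u v) (i : Fin γ) :
    ∃ p ∈ D, p.1 = i := by
  by_cases hik : (i : ℕ) < γ/2
  · -- (i,2)'s closed neighborhood is {(i,0),(i,2)}
    by_cases h2 : (i, (2 : Fin 3)) ∈ D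
    · exact ⟨_, h2, rfl⟩
    · obtain ⟨⟨j, s⟩, hj, hadj⟩ := hD _ h2
      refine ⟨_, hj, ?_⟩
      rw [pg_adj] at hadj
      rcases hadj with ⟨h1, _⟩ | h | h
      · exact h1
      · exfalso; simp at h <;> omega
      · exfalso; simp at h <;> omega
  · -- (i,0)'s closed neighborhood is {(i,0),(i,1),(i,2)}
    by_cases h0 : (i, (0 : Fin 3)) ∈ D
    · exact ⟨_, h0, rfl⟩
    · obtain ⟨⟨j, s⟩, hj, hadj⟩ := hD _ h0
      refine ⟨_, hj, ?_⟩
      rw [pg_adj] at hadj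
      rcases hadj with ⟨h1, _⟩ | h | h
      · exact h1
      · exfalso; simp at h <;> omega
      · exfalso; simp at h <;> omega

lemma card_ge {γ : ℕ} {D : Finset (Fin γ × Fin 3)}
    (hD : ∀ v, v ∉ D → ∃ u ∈ D, (pg γ).Adj u v) : γ ≤ D.card := by
  choose g hg1 hg2 using column_witness hD
  calc γ = (univ : Finset (Fin γ)).card := by simp
  _ ≤ D.card := by
      apply Finset.card_le_card_of_injOn g (fun i _ => hg1 i)
      intro a _ b _ hab
      have := hg2 a
      have := hg2 b
      have ha := hg2 a
      have hb := hg2 b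
      rw [hab] at ha
      rw [ha] at hb
      exact hb

end Stmt13Aux

namespace Stmt13Aux2
open Stmt13Aux

lemma unique_min {γ : ℕ} {D : Finset (Fin γ × Fin 3)}
    (hD : ∀ v, v ∉ D → ∃ u ∈ D, (pg γ).Adj u v) (hcard : D.card = γ) : D = C γ := by
  choose g hg1 hg2 using column_witness hD
  have hinj : Function.Injective g := by
    intro a b hab
    have ha := hg2 a; have hb := hg2 b
    rw [hab] at ha; rw [ha] at hb; exact hb
  have hDim : univ.image g = D := by
    apply Finset.eq_of_subset_of_card_le
    · intro p hp
      obtain ⟨i, _, hi⟩ := Finset.mem_image.mp hp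
      exact hi ▸ hg1 i
    · rw [hcard, Finset.card_image_of_injective _ hinj, card_univ, Fintype.card_fin]
  have hcol : ∀ p ∈ D, g p.1 = p := by
    intro p hp
    rw [← hDim] at hp
    obtain ⟨i, _, hi⟩ := Finset.mem_image.mp hp
    have := hg2 i
    rw [hi] at this
    rw [this]
    exact hi
  -- step A : columns left of γ/2 hold the center or the b-leaf
  have stepA : ∀ i : Fin γ, (i : ℕ) < γ/2 → ((g i).2 : ℕ) = 0 ∨ ((g i).2 : ℕ) = 2 := by
    intro i hik
    by_cases h2 : (i, (2 : Fin 3)) ∈ D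
    · have := hcol _ h2
      rw [this]; right; rfl
    · obtain ⟨u, hu, hadj⟩ := hD _ h2
      rw [pg_adj] at hadj
      have hcu := hcol _ hu
      rcases hadj with ⟨h1, hh⟩ | h | h
      · -- u = (i, 0)
        left
        have : u.1 = i := h1
        rw [← this, hcu]
        simp at hh ⊢
        omega
      · exfalso; simp at h <;> omega
      · exfalso; simp at h <;> omega
  -- step B : columns right of γ/2 hold the center
  have stepB : ∀ j : Fin γ, γ/2 ≤ (j : ℕ) → ((g j).2 : ℕ) = 0 := by
    intro j hjk
    -- (j,2) must be dominated
    have h2 : ((g j).2 : ℕ) = 0 ∨ ((g j).2 : ℕ) = 2 := by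
      by_cases h2 : (j, (2 : Fin 3)) ∈ D
      · have := hcol _ h2; rw [this]; right; rfl
      · obtain ⟨u, hu, hadj⟩ := hD _ h2
        rw [pg_adj] at hadj
        have hcu := hcol _ hu
        rcases hadj with ⟨h1, hh⟩ | h | h
        · left
          have : u.1 = j := h1
          rw [← this, hcu]
          simp at hh ⊢
          omega
        · -- u is an a-leaf from a left column: impossible by step A
          exfalso
          have hA := stepA u.1 h.1
          rw [hcu] at hA
          omega
        · exfalso; simp at h <;> omega
    -- (j,1) must be dominated
    have h1 : ((g j).2 : ℕ) = 0 ∨ ((g j).2 : ℕ) = 1 := by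
      by_cases h1 : (j, (1 : Fin 3)) ∈ D
      · have := hcol _ h1; rw [this]; right; rfl
      · obtain ⟨u, hu, hadj⟩ := hD _ h1
        rw [pg_adj] at hadj
        have hcu := hcol _ hu
        rcases hadj with ⟨hq, hh⟩ | h | h
        · left
          have : u.1 = j := hq
          rw [← this, hcu]
          simp at hh ⊢
          omega
        · exfalso
          have hA := stepA u.1 h.1
          rw [hcu] at hA
          omega
        · exfalso; simp at h <;> omega
    omega
  -- step C : columns left of γ/2 hold the center
  have stepC : ∀ i : Fin γ, (i : ℕ) < γ/2 → ((g i).2 : ℕ) = 0 := by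
    intro i hik
    by_cases h1 : (i, (1 : Fin 3)) ∈ D
    · exfalso
      have := hcol _ h1
      have hA := stepA i hik
      rw [this] at hA
      simp at hA
    · obtain ⟨u, hu, hadj⟩ := hD _ h1
      rw [pg_adj] at hadj
      have hcu := hcol _ hu
      rcases hadj with ⟨hq, hh⟩ | h | h
      · have : u.1 = i := hq
        rw [← this, hcu]
        simp at hh ⊢
        omega
      · exfalso; simp at h <;> omega
      · exfalso
        have hB := stepB u.1 h.2.2.1
        rw [hcu] at hB
        simp at h
        omega
  -- conclude
  have hall : ∀ i : Fin γ, ((g i).2 : ℕ) = 0 := by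
    intro i
    by_cases hik : (i : ℕ) < γ/2
    · exact stepC i hik
    · exact stepB i (by omega)
  rw [← hDim]
  ext p
  simp only [mem_image, mem_univ, true_and, mem_C]
  constructor
  · rintro ⟨i, rfl⟩; exact hall i
  · intro hp
    refine ⟨p.1, ?_⟩
    have h1 := hg2 p.1
    have h2 := hall p.1
    exact Prod.ext_iff.mpr ⟨h1, Fin.ext (by omega)⟩

end Stmt13Aux2

open Stmt13Aux Stmt13Aux2 Finset

theorem stmt13 (γ : ℕ) (hγ : 2 ≤ γ) :
    ∃ (G : SimpleGraph (Fin (3 * γ))) (D : Finset (Fin (3 * γ))),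
      G.Colorable 2 ∧
      (∀ v, ∃ u, G.Adj u v) ∧
      IsUMDS G D ∧ D.card = γ ∧
      G.edgeSet.ncard = 2 * γ + 2 * ((γ + 1) / 2) * (γ / 2) := by
  obtain ⟨e⟩ : Nonempty ((Fin γ × Fin 3) ≃ Fin (3 * γ)) :=
    ⟨Fintype.equivOfCardEq (by simp [mul_comm])⟩
  refine ⟨(pg γ).comap e.symm.toEmbedding, (C γ).image e, ?_, ?_, ?_, ?_, ?_⟩
  · -- colorable
    refine ⟨SimpleGraph.Coloring.mk
      (fun v => if (((e.symm v).1 : ℕ) < γ/2 ↔ ((e.symm v).2 : ℕ) = 0) then 0 else 1) ?_⟩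
    intro u v hadj heq
    have hadj' : rel γ (e.symm u) (e.symm v) := hadj
    split_ifs at heq with h1 h2 h2
    · rcases hadj' with ⟨hq, hh⟩ | h | h
      · have := congrArg Fin.val hq; omega
      · omega
      · omega
    · exact absurd heq (by decide)
    · exact absurd heq (by decide)
    · rcases hadj' with ⟨hq, hh⟩ | h | h
      · have := congrArg Fin.val hq; omega
      · omega
      · omega
  · -- no isolated vertices
    intro v
    by_cases h0 : ((e.symm v).2 : ℕ) = 0
    · refine ⟨e ((e.symm v).1, 1), ?_⟩
      show rel γ (e.symm (e _)) (e.symm v)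
      rw [Equiv.symm_apply_apply]
      exact Or.inl ⟨rfl, Or.inr ⟨h0, by simp⟩⟩
    · refine ⟨e ((e.symm v).1, 0), ?_⟩
      show rel γ (e.symm (e _)) (e.symm v)
      rw [Equiv.symm_apply_apply]
      exact Or.inl ⟨rfl, Or.inl ⟨rfl, h0⟩⟩
  · -- IsUMDS
    have hdom : IsDomSet ((pg γ).comap e.symm.toEmbedding) ((C γ).image e) := by
      intro v hv
      have hv' : e.symm v ∉ C γ := by
        intro hc
        exact hv (Finset.mem_image.mpr ⟨e.symm v, hc, by simp⟩)
      obtain ⟨u, hu, hadj⟩ := C_domset γ _ hv'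
      refine ⟨e u, Finset.mem_image.mpr ⟨u, hu, rfl⟩, ?_⟩
      show rel γ (e.symm (e u)) (e.symm v)
      rw [Equiv.symm_apply_apply]
      exact hadj
    have htrans : ∀ D' : Finset (Fin (3 * γ)),
        IsDomSet ((pg γ).comap e.symm.toEmbedding) D' →
        (∀ p, p ∉ D'.image ⇑e.symm → ∃ u ∈ D'.image ⇑e.symm, (pg γ).Adj u p) := by
      intro D' hD' p hp
      have hep : e p ∉ D' := by
        intro hc
        exact hp (Finset.mem_image.mpr ⟨e p, hc, by simp⟩)
      obtain ⟨u, hu, hadj⟩ := hD' _ hep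
      have hadj' : rel γ (e.symm u) (e.symm (e p)) := hadj
      rw [Equiv.symm_apply_apply] at hadj'
      exact ⟨e.symm u, Finset.mem_image.mpr ⟨u, hu, rfl⟩, hadj'⟩
    have hcardD : ((C γ).image e).card = γ := by
      rw [Finset.card_image_of_injective _ e.injective, card_C]
    refine ⟨hdom, ?_, ?_⟩
    · intro D' hD'
      have := card_ge (htrans D' hD')
      rw [Finset.card_image_of_injective _ e.symm.injective] at this
      omega
    · intro D' hD' hcard'
      have hC : D'.image ⇑e.symm = C γ := by
        apply unique_min (htrans D' hD')
        rw [Finset.card_image_of_injective _ e.symm.injective, hcard', hcardD]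
      have : D' = (D'.image ⇑e.symm).image ⇑e := by
        rw [Finset.image_image]
        simp
      rw [this, hC]
  · rw [Finset.card_image_of_injective _ e.injective, card_C]
  · -- edge count
    have iso : ((pg γ).comap e.symm.toEmbedding) ≃g pg γ := SimpleGraph.Iso.comap e.symm (pg γ)
    have h1 : ((pg γ).comap e.symm.toEmbedding).edgeSet.ncard = (pg γ).edgeSet.ncard := by
      rw [← Nat.card_coe_set_eq, ← Nat.card_coe_set_eq]
      exact Nat.card_congr iso.mapEdgeSet
    rw [h1, Set.ncard_eq_toFinset_card']
    have h2 : ((pg γ).edgeSet).toFinset = (pg γ).edgeFinset := rfl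
    rw [h2, edge_count]
    have h3 : (γ + 1) / 2 = γ - γ/2 := by omega
    rw [h3]
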